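/- Let s ≥ 1 and q ≥ 2 be integers, let m₁, …, m_{q−1} be integers, and let f₁, …, f_{q−1} be twin Laurent polynomials. Then the Laurent polynomial ∑_{j=1}^{q−1} m_j·{Y⁻¹t⁻¹·(I − Yt)·Q_{3s−1}(t)·Yt·(Xt − I)}·f_j + t^{6s}·f_{q−1} − ∑_{j=1}^{s} XYX·t^{6s−6j+3} + ∑_{j=1}^{s} I·t^{6s−6j} is twin. -/

import Mathlib

/-- The image of (123) under the irreducible 3-dimensional integral representation of A₄. -/
def Xm : Matrix (Fin 3) (Fin 3) ℤ := !![-1, 1, 0; -1, 0, 0; -1, 0, 1]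

/-- The image of (142) under the irreducible 3-dimensional integral representation of A₄. -/
def Ym : Matrix (Fin 3) (Fin 3) ℤ := !![0, 0, -1; 0, 1, -1; 1, 0, -1]

/-- The inverse of `Xm`, which equals `Xm ^ 2`. -/
def Xinv : Matrix (Fin 3) (Fin 3) ℤ := Xm ^ 2

/-- The inverse of `Ym`, which equals `Ym ^ 2`. -/
def Yinv : Matrix (Fin 3) (Fin 3) ℤ := Ym ^ 2

open LaurentPolynomial Finset

/-- 3×3 integer matrices. -/
abbrev M3 : Type := Matrix (Fin 3) (Fin 3) ℤ

/-- Laurent polynomials in `t` with coefficients in `M3`. -/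
abbrev L : Type := LaurentPolynomial M3

/-- A Laurent polynomial `f = ∑ d_j t^j` with 3×3 integer matrix coefficients is *twin* if
`d_j = c_j I + c_j' (XYX)` for `j ≡ 0 (mod 3)`, `d_j = a_j (X+Y)` for `j ≡ 1 (mod 3)`,
`d_j = b_j (X⁻¹+Y⁻¹)` for `j ≡ 2 (mod 3)`, and `a_{3j+1} = b_{3j+2}` for all `j`. -/
def IsTwin (f : L) : Prop :=
  ∃ c c' a b : ℤ → ℤ,
    (∀ j : ℤ, j % 3 = 0 → AddMonoidAlgebra.coeff f j = c j • (1 : M3) + c' j • (Xm * Ym * Xm)) ∧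
    (∀ j : ℤ, j % 3 = 1 → AddMonoidAlgebra.coeff f j = a j • (Xm + Ym)) ∧
    (∀ j : ℤ, j % 3 = 2 → AddMonoidAlgebra.coeff f j = b j • (Xinv + Yinv)) ∧
    (∀ j : ℤ, a (3 * j + 1) = b (3 * j + 2))

/-- `Q m = ∑_{i=0}^m (YX)^i t^{2i}` for `m ≥ 0` and
`Q (-m) = ∑_{i=1}^m (X⁻¹Y⁻¹)^i t^{-2i}` for `m ≥ 1`. -/
noncomputable def Q (m : ℤ) : L :=
  if 0 ≤ m then ∑ i ∈ Finset.range (m.toNat + 1), C ((Ym * Xm) ^ i) * T (2 * (i : ℤ))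
  else ∑ i ∈ Finset.range (-m).toNat, C ((Xinv * Yinv) ^ (i + 1)) * T (-(2 * ((i : ℤ) + 1)))

instance instCoeFunL : CoeFun L (fun _ => ℤ → M3) := ⟨fun f => ⇑(AddMonoidAlgebra.coeff f)⟩

-- ### basic CT lemmas
lemma CT_mul (M N : M3) (a b : ℤ) : (C M * T a) * (C N * T b) = C (M*N) * T (a+b) := by
  rw [← single_eq_C_mul_T, ← single_eq_C_mul_T, ← single_eq_C_mul_T]
  exact AddMonoidAlgebra.single_mul_single _ _ _ _
lemma CT_add (M N : M3) (a : ℤ) : C M * T a + C N * T a = C (M+N) * T a := by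
  rw [← add_mul, ← map_add]
lemma coeffCT (M : M3) (e n : ℤ) : (C M * T e : L) n = if e = n then M else 0 := by
  rw [← single_eq_C_mul_T]; exact Finsupp.single_apply

lemma Lcoeff_add (f g : L) (n : ℤ) : (f + g) n = f n + g n := Finsupp.add_apply _ _ _
lemma Lcoeff_sub (f g : L) (n : ℤ) : (f - g) n = f n - g n := Finsupp.sub_apply _ _ _
lemma Lcoeff_neg (f : L) (n : ℤ) : (-f) n = -(f n) := Finsupp.neg_apply _ _
lemma Lcoeff_smul (z : ℤ) (f : L) (n : ℤ) : (z • f) n = z • (f n) := Finsupp.smul_apply _ _ _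
lemma Lcoeff_one (n : ℤ) : (1 : L) n = if 0 = n then 1 else 0 := by
  rw [show (1:L) = C 1 * T 0 by simp [T_zero], coeffCT]
lemma Lcoeff_T (e n : ℤ) : (T e : L) n = if e = n then 1 else 0 := by
  rw [show (T e:L) = C 1 * T e by simp, coeffCT]

-- ### generators
noncomputable def gU (j : ℤ) : L := C (1:M3) * T (3*j)
noncomputable def gV (j : ℤ) : L := C (Xm*Ym*Xm) * T (3*j)
noncomputable def gW (j : ℤ) : L := C (Xm+Ym) * T (3*j+1) + C (Xinv+Yinv) * T (3*j+2)

-- ### closure lemmas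
lemma IsTwin.add {f g : L} (hf : IsTwin f) (hg : IsTwin g) : IsTwin (f + g) := by
  obtain ⟨c, c', a, b, h0, h1, h2, hab⟩ := hf
  obtain ⟨d, d', e, e', k0, k1, k2, kab⟩ := hg
  refine ⟨c + d, c' + d', a + e, b + e', fun j hj => ?_, fun j hj => ?_, fun j hj => ?_,
    fun j => ?_⟩
  · rw [Lcoeff_add, h0 j hj, k0 j hj]; simp [add_smul]; abel
  · rw [Lcoeff_add, h1 j hj, k1 j hj]; simp [add_smul]; abel
  · rw [Lcoeff_add, h2 j hj, k2 j hj]; simp [add_smul]; abel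
  · simp [hab j, kab j]

lemma IsTwin.smul (z : ℤ) {f : L} (hf : IsTwin f) : IsTwin (z • f) := by
  obtain ⟨c, c', a, b, h0, h1, h2, hab⟩ := hf
  refine ⟨z • c, z • c', z • a, z • b, fun j hj => ?_, fun j hj => ?_, fun j hj => ?_,
    fun j => ?_⟩
  · rw [Lcoeff_smul, h0 j hj]; simp [smul_smul, mul_smul, smul_add]
  · rw [Lcoeff_smul, h1 j hj]; simp [smul_smul, mul_smul]
  · rw [Lcoeff_smul, h2 j hj]; simp [smul_smul, mul_smul]
  · simp [hab j]

lemma isTwin_zero : IsTwin (0 : L) :=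
  ⟨0, 0, 0, 0, by simp, by simp, by simp, by simp⟩

lemma IsTwin.neg {f : L} (hf : IsTwin f) : IsTwin (-f) := by
  have := hf.smul (-1); rwa [neg_one_zsmul] at this

lemma IsTwin.sub {f g : L} (hf : IsTwin f) (hg : IsTwin g) : IsTwin (f - g) := by
  rw [sub_eq_add_neg]; exact hf.add hg.neg

lemma IsTwin.sum {ι : Type*} (s : Finset ι) (g : ι → L) (h : ∀ i ∈ s, IsTwin (g i)) :
    IsTwin (∑ i ∈ s, g i) := by
  induction s using Finset.cons_induction with
  | empty => simpa using isTwin_zero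
  | cons i s hi ih =>
    rw [Finset.sum_cons]
    exact (h i (Finset.mem_cons_self _ _)).add (ih fun j hj => h j (Finset.mem_cons_of_mem hj))

-- ### generators are twin
lemma isTwin_gU (j : ℤ) : IsTwin (gU j) := by
  refine ⟨fun n => if n = 3*j then 1 else 0, 0, 0, 0, fun n hn => ?_, fun n hn => ?_,
    fun n hn => ?_, fun n => rfl⟩ <;> beta_reduce
  · by_cases h : n = 3*j
    · rw [gU, coeffCT, if_pos (show 3*j = n by omega)]; simp [h]
    · rw [gU, coeffCT, if_neg (by omega)]; simp [h]
  · rw [gU, coeffCT, if_neg (by omega)]; simp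
  · rw [gU, coeffCT, if_neg (by omega)]; simp

lemma isTwin_gV (j : ℤ) : IsTwin (gV j) := by
  refine ⟨0, fun n => if n = 3*j then 1 else 0, 0, 0, fun n hn => ?_, fun n hn => ?_,
    fun n hn => ?_, fun n => rfl⟩ <;> beta_reduce
  · by_cases h : n = 3*j
    · rw [gV, coeffCT, if_pos (show 3*j = n by omega)]; simp [h]
    · rw [gV, coeffCT, if_neg (by omega)]; simp [h]
  · rw [gV, coeffCT, if_neg (by omega)]; simp
  · rw [gV, coeffCT, if_neg (by omega)]; simp

lemma isTwin_gW (j : ℤ) : IsTwin (gW j) := by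
  refine ⟨0, 0, fun n => if n = 3*j+1 then 1 else 0, fun n => if n = 3*j+2 then 1 else 0,
    fun n hn => ?_, fun n hn => ?_, fun n hn => ?_, fun n => ?_⟩ <;> beta_reduce
  · rw [gW, Lcoeff_add, coeffCT, coeffCT, if_neg (show ¬(3*j+1 = n) by omega),
      if_neg (show ¬(3*j+2 = n) by omega)]; simp
  · rw [gW, Lcoeff_add, coeffCT, coeffCT, if_neg (show ¬(3*j+2 = n) by omega)]
    by_cases h : n = 3*j+1
    · rw [if_pos (by omega)]; simp [h]
    · rw [if_neg (by omega)]; simp [h]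
  · rw [gW, Lcoeff_add, coeffCT, coeffCT, if_neg (show ¬(3*j+1 = n) by omega)]
    by_cases h : n = 3*j+2
    · rw [if_pos (by omega)]; simp [h]
    · rw [if_neg (by omega)]; simp [h]
  · split_ifs <;> omega

-- ### decomposition
lemma twin_decomp {f : L} (hf : IsTwin f) :
    ∃ (S : Finset ℤ) (c c' a : ℤ → ℤ),
      f = ∑ j ∈ S, (c j • gU j + c' j • gV j + a j • gW j) := by
  obtain ⟨c, c', a, b, h0, h1, h2, hab⟩ := hf
  refine ⟨f.coeff.support.image (· / 3), fun j => c (3*j), fun j => c' (3*j), fun j => a (3*j+1), ?_⟩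
  refine LaurentPolynomial.ext fun n => ?_
  rw [AddMonoidAlgebra.coeff_sum, Finsupp.finset_sum_apply]
  have hterm : ∀ j : ℤ, ((c (3*j) • gU j + c' (3*j) • gV j + a (3*j+1) • gW j : L)) n
      = c (3*j) • (if 3*j = n then (1:M3) else 0) + c' (3*j) • (if 3*j = n then (Xm*Ym*Xm) else 0)
        + a (3*j+1) • ((if 3*j+1 = n then (Xm+Ym) else 0) + (if 3*j+2 = n then (Xinv+Yinv) else 0)) := by
    intro j
    rw [Lcoeff_add, Lcoeff_add, Lcoeff_smul, Lcoeff_smul,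
      Lcoeff_smul, gU, gV, gW, Lcoeff_add, coeffCT, coeffCT, coeffCT, coeffCT]
  have main : c (3*(n/3)) • (if 3*(n/3) = n then (1:M3) else 0)
      + c' (3*(n/3)) • (if 3*(n/3) = n then (Xm*Ym*Xm) else 0)
      + a (3*(n/3)+1) • ((if 3*(n/3)+1 = n then (Xm+Ym) else 0)
          + (if 3*(n/3)+2 = n then (Xinv+Yinv) else 0)) = f n := by
    have h3 : n % 3 = 0 ∨ n % 3 = 1 ∨ n % 3 = 2 := by omega
    rcases h3 with h3 | h3 | h3
    · rw [if_pos (by omega), if_pos (by omega), if_neg (by omega), if_neg (by omega),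
        show 3*(n/3) = n by omega, h0 n h3]
      simp
    · rw [if_neg (by omega), if_neg (by omega), if_pos (by omega), if_neg (by omega),
        show 3*(n/3)+1 = n by omega, h1 n h3]
      simp
    · have hb : b n = a (3*(n/3)+1) := by rw [hab (n/3)]; congr 1; omega
      rw [if_neg (by omega), if_neg (by omega), if_neg (by omega), if_pos (by omega),
        h2 n h3, hb]
      simp
  rw [Finset.sum_congr rfl (fun j _ => hterm j),
    Finset.sum_eq_single (n/3) (fun j _ hj => ?_) (fun hns => ?_), main]
  · rw [if_neg (by omega), if_neg (by omega), if_neg (by omega), if_neg (by omega)]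
    simp
  · rw [main]
    by_contra hfn
    exact hns (Finset.mem_image_of_mem _ (Finsupp.mem_support_iff.mpr hfn))

-- ### products of generators
lemma gU_mul_gU (i j : ℤ) : gU i * gU j = gU (i+j) := by
  rw [gU, gU, gU, CT_mul, one_mul, show 3*i+3*j = 3*(i+j) by ring]
lemma gU_mul_gV (i j : ℤ) : gU i * gV j = gV (i+j) := by
  rw [gU, gV, gV, CT_mul, one_mul, show 3*i+3*j = 3*(i+j) by ring]
lemma gV_mul_gU (i j : ℤ) : gV i * gU j = gV (i+j) := by
  rw [gU, gV, gV, CT_mul, mul_one, show 3*i+3*j = 3*(i+j) by ring]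
lemma gV_mul_gV (i j : ℤ) : gV i * gV j = gU (i+j) := by
  rw [gV, gV, gU, CT_mul, show (Xm*Ym*Xm) * (Xm*Ym*Xm) = 1 by decide,
    show 3*i+3*j = 3*(i+j) by ring]
lemma gU_mul_gW (i j : ℤ) : gU i * gW j = gW (i+j) := by
  rw [gU, gW, gW, mul_add, CT_mul, CT_mul, one_mul, one_mul,
    show 3*i+(3*j+1) = 3*(i+j)+1 by ring, show 3*i+(3*j+2) = 3*(i+j)+2 by ring]
lemma gW_mul_gU (i j : ℤ) : gW i * gU j = gW (i+j) := by
  rw [gU, gW, gW, add_mul, CT_mul, CT_mul, mul_one, mul_one,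
    show 3*i+1+3*j = 3*(i+j)+1 by ring, show 3*i+2+3*j = 3*(i+j)+2 by ring]
lemma gV_mul_gW (i j : ℤ) : gV i * gW j = -gW (i+j) := by
  rw [gV, gW, gW, mul_add, CT_mul, CT_mul,
    show (Xm*Ym*Xm) * (Xm+Ym) = -(Xm+Ym) by decide,
    show (Xm*Ym*Xm) * (Xinv+Yinv) = -(Xinv+Yinv) by decide,
    show 3*i+(3*j+1) = 3*(i+j)+1 by ring, show 3*i+(3*j+2) = 3*(i+j)+2 by ring,
    map_neg, map_neg, neg_mul (C (Xm+Ym)) (T (3*(i+j)+1)),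
    neg_mul (C (Xinv+Yinv)) (T (3*(i+j)+2)), neg_add]
lemma gW_mul_gV (i j : ℤ) : gW i * gV j = -gW (i+j) := by
  rw [gV, gW, gW, add_mul, CT_mul, CT_mul,
    show (Xm+Ym) * (Xm*Ym*Xm) = -(Xm+Ym) by decide,
    show (Xinv+Yinv) * (Xm*Ym*Xm) = -(Xinv+Yinv) by decide,
    show 3*i+1+3*j = 3*(i+j)+1 by ring, show 3*i+2+3*j = 3*(i+j)+2 by ring,
    map_neg, map_neg, neg_mul (C (Xm+Ym)) (T (3*(i+j)+1)),
    neg_mul (C (Xinv+Yinv)) (T (3*(i+j)+2)), neg_add]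
lemma gW_mul_gW (i j : ℤ) : gW i * gW j = (2:ℤ) • gU (i+j+1) - (2:ℤ) • gV (i+j+1) := by
  rw [gW, gW, gU, gV, add_mul, mul_add, mul_add, CT_mul, CT_mul, CT_mul, CT_mul,
    show (Xm+Ym) * (Xm+Ym) = 0 by decide, show (Xinv+Yinv) * (Xinv+Yinv) = 0 by decide,
    show 3*i+1+(3*j+2) = 3*(i+j+1) by ring, show 3*i+2+(3*j+1) = 3*(i+j+1) by ring,
    map_zero, zero_mul, zero_mul, add_zero, zero_add, CT_add,
    show (Xm+Ym) * (Xinv+Yinv) + (Xinv+Yinv) * (Xm+Ym) = (2:ℤ) • (1:M3) - (2:ℤ) • (Xm*Ym*Xm) by decide,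
    map_sub, map_zsmul, map_zsmul, sub_mul, smul_mul_assoc, smul_mul_assoc]
-- ### product closure
lemma isTwin_term_mul (ci ci' ai cj cj' aj i j : ℤ) :
    IsTwin ((ci • gU i + ci' • gV i + ai • gW i) * (cj • gU j + cj' • gV j + aj • gW j)) := by
  simp only [add_mul, mul_add, smul_mul_assoc, mul_smul_comm, gU_mul_gU, gU_mul_gV, gU_mul_gW,
    gV_mul_gU, gV_mul_gV, gV_mul_gW, gW_mul_gU, gW_mul_gV, gW_mul_gW]
  have t1 : IsTwin (ci • gU (i+j) + ci' • gV (i+j) + ai • gW (i+j)) :=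
    (((isTwin_gU (i+j)).smul ci).add ((isTwin_gV (i+j)).smul ci')).add ((isTwin_gW (i+j)).smul ai)
  have t2 : IsTwin (ci • gV (i+j) + ci' • gU (i+j) + ai • -gW (i+j)) :=
    (((isTwin_gV (i+j)).smul ci).add ((isTwin_gU (i+j)).smul ci')).add
      (((isTwin_gW (i+j)).neg).smul ai)
  have t3 : IsTwin (ci • gW (i+j) + ci' • -gW (i+j) +
      ai • ((2:ℤ) • gU (i+j+1) - (2:ℤ) • gV (i+j+1))) :=
    (((isTwin_gW (i+j)).smul ci).add (((isTwin_gW (i+j)).neg).smul ci')).add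
      ((((isTwin_gU (i+j+1)).smul 2).sub ((isTwin_gV (i+j+1)).smul 2)).smul ai)
  exact ((t1.smul cj).add (t2.smul cj')).add (t3.smul aj)

theorem IsTwin.mul {f g : L} (hf : IsTwin f) (hg : IsTwin g) : IsTwin (f * g) := by
  obtain ⟨S, c, c', a, hfe⟩ := twin_decomp hf
  obtain ⟨S', d, d', e, hge⟩ := twin_decomp hg
  rw [hfe, hge, Finset.sum_mul_sum]
  exact IsTwin.sum _ _ fun i _ => IsTwin.sum _ _ fun j _ => isTwin_term_mul _ _ _ _ _ _ _ _
-- ### the kernel polynomial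
noncomputable def QN (k : ℕ) : L := ∑ i ∈ Finset.range (k+1), C ((Ym*Xm)^i) * T (2*(i:ℤ))

lemma hQ2 : (QN 2 : L) = C 1 * T 0 + C (Ym*Xm) * T 2 + C ((Ym*Xm)*(Ym*Xm)) * T 4 := by
  rw [QN, Finset.sum_range_succ, Finset.sum_range_succ, Finset.sum_range_one]
  norm_num [pow_succ]

lemma isTwin_K0 :
    IsTwin (C Yinv * T (-1) * (1 - C Ym * T 1) * (QN 2) * (C Ym * T 1) * (C Xm * T 1 - 1)) := by
  have hK : (C Yinv * T (-1) * (1 - C Ym * T 1) * (QN 2) * (C Ym * T 1) * (C Xm * T 1 - 1) : L)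
      = (-1:ℤ) • gU 0 + (1:ℤ) • gW 0 + (2:ℤ) • gV 1 + (1:ℤ) • gW 1 + (-1:ℤ) • gU 2 := by
    rw [hQ2]
    refine LaurentPolynomial.ext fun n => ?_
    simp only [mul_add, add_mul, mul_sub, sub_mul, mul_one, one_mul, CT_mul, gU, gV, gW,
      Lcoeff_add, Lcoeff_sub, Lcoeff_neg, Lcoeff_smul, Lcoeff_one, Lcoeff_T, coeffCT]
    rcases (by omega : n = 0 ∨ n = 1 ∨ n = 2 ∨ n = 3 ∨ n = 4 ∨ n = 5 ∨ n = 6 ∨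
        (n < 0 ∨ 6 < n)) with h|h|h|h|h|h|h|h
    · subst h; norm_num; decide
    · subst h; norm_num; decide
    · subst h; norm_num; decide
    · subst h; norm_num; decide
    · subst h; norm_num; decide
    · subst h; norm_num; decide
    · subst h; norm_num; decide
    · have h0 : (0:ℤ) ≠ n := by omega
      have h1 : (1:ℤ) ≠ n := by omega
      have h2 : (2:ℤ) ≠ n := by omega
      have h3 : (3:ℤ) ≠ n := by omega
      have h4 : (4:ℤ) ≠ n := by omega
      have h5 : (5:ℤ) ≠ n := by omega
      have h6 : (6:ℤ) ≠ n := by omega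
      norm_num [h0, h1, h2, h3, h4, h5, h6]
  rw [hK]
  exact (((((isTwin_gU 0).smul (-1)).add ((isTwin_gW 0).smul 1)).add
    ((isTwin_gV 1).smul 2)).add ((isTwin_gW 1).smul 1)).add ((isTwin_gU 2).smul (-1))
lemma CT_eq {M M' : M3} {e e' : ℤ} (h1 : M = M') (h2 : e = e') : C M * T e = C M' * T e' := by
  rw [h1, h2]

lemma QN_succ (m : ℕ) : QN (m+1) = QN m + C ((Ym*Xm)^(m+1)) * T (2*(m:ℤ)+2) := by
  rw [QN, QN, Finset.sum_range_succ]
  congr 1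

lemma QN_step (k : ℕ) : QN (3*k+5) = QN (3*k+2) + T (6*(k:ℤ)+6) * QN 2 := by
  have hYX : ((Ym*Xm))^3 = 1 := by decide
  have t1 : C ((Ym*Xm)^(3*k+2+1)) * T (2*((3*k+2 : ℕ):ℤ)+2) = C (1:M3) * T (6*(k:ℤ)+6) :=
    CT_eq (by rw [show 3*k+2+1 = 3*(k+1) by omega, pow_mul, hYX, one_pow]) (by push_cast; ring)
  have t2 : C ((Ym*Xm)^(3*k+2+1+1)) * T (2*((3*k+2+1 : ℕ):ℤ)+2)
      = C (Ym*Xm) * T (6*(k:ℤ)+8) :=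
    CT_eq (by rw [show 3*k+2+1+1 = 3*(k+1)+1 by omega, pow_add, pow_mul, hYX, one_pow,
      one_mul, pow_one]) (by push_cast; ring)
  have t3 : C ((Ym*Xm)^(3*k+2+1+1+1)) * T (2*((3*k+2+1+1 : ℕ):ℤ)+2)
      = C ((Ym*Xm)*(Ym*Xm)) * T (6*(k:ℤ)+10) :=
    CT_eq (by rw [show 3*k+2+1+1+1 = 3*(k+1)+2 by omega, pow_add, pow_mul, hYX, one_pow,
      one_mul, pow_two]) (by push_cast; ring)
  rw [show 3*k+5 = (3*k+4)+1 by omega, QN_succ, show 3*k+4 = (3*k+3)+1 by omega, QN_succ,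
    show 3*k+3 = (3*k+2)+1 by omega, QN_succ, t1, t2, t3, hQ2, mul_add, mul_add]
  simp only [T_mul, mul_T_assoc]
  rw [show (0:ℤ)+(6*(k:ℤ)+6) = 6*(k:ℤ)+6 by ring, show (2:ℤ)+(6*(k:ℤ)+6) = 6*(k:ℤ)+8 by ring,
    show (4:ℤ)+(6*(k:ℤ)+6) = 6*(k:ℤ)+10 by ring]
  abel

lemma Q_eq_QN (k : ℕ) : Q (k : ℤ) = QN k := by
  rw [Q, if_pos (Int.natCast_nonneg k), Int.toNat_natCast, QN]

lemma isTwin_K (s : ℕ) (hs : 1 ≤ s) :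
    IsTwin (C Yinv * T (-1) * (1 - C Ym * T 1) * Q (3*(s:ℤ)-1) * (C Ym * T 1) *
      (C Xm * T 1 - 1)) := by
  obtain ⟨u, rfl⟩ : ∃ u, s = u+1 := ⟨s-1, by omega⟩
  have hQQ : Q (3*((u+1:ℕ):ℤ)-1) = QN (3*u+2) := by
    rw [show 3*((u+1:ℕ):ℤ)-1 = ((3*u+2 : ℕ):ℤ) by push_cast; ring, Q_eq_QN]
  rw [hQQ]
  clear hs hQQ
  induction u with
  | zero => norm_num; exact isTwin_K0
  | succ v ih =>
    have key : ∀ f g : L, f * (T (6*(v:ℤ)+6) * g) = T (6*(v:ℤ)+6) * (f * g) := by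
      intro f g; rw [← mul_assoc, ← T_mul, mul_assoc]
    have hT : IsTwin (T (6*(v:ℤ)+6) : L) := by
      have : (T (6*(v:ℤ)+6) : L) = gU (2*v+2) := by
        rw [gU, map_one, one_mul]; exact congrArg T (by ring)
      rw [this]; exact isTwin_gU _
    rw [show 3*(v+1)+2 = 3*v+5 by omega, QN_step, mul_add, key, add_mul, add_mul,
      mul_assoc (T (6*(v:ℤ)+6)), mul_assoc (T (6*(v:ℤ)+6))]
    exact ih.add (hT.mul isTwin_K0)

/-- For integers `s ≥ 1`, `q ≥ 2`, integers `m₁, …, m_{q−1}` and twin Laurent polynomials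
`f₁, …, f_{q−1}`, the Laurent polynomial
`∑_{j=1}^{q−1} m_j·{Y⁻¹t⁻¹·(I − Yt)·Q_{3s−1}(t)·Yt·(Xt − I)}·f_j + t^{6s}·f_{q−1}
  − ∑_{j=1}^{s} XYX·t^{6s−6j+3} + ∑_{j=1}^{s} I·t^{6s−6j}` is twin. -/
theorem stmt_17 (s q : ℕ) (hs : 1 ≤ s) (hq : 2 ≤ q) (m : ℕ → ℤ) (f : ℕ → L)
    (hf : ∀ j, 1 ≤ j → j ≤ q - 1 → IsTwin (f j)) :
    IsTwin (∑ j ∈ Finset.Icc 1 (q - 1),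
        m j • (C Yinv * T (-1) * (1 - C Ym * T 1) * Q (3 * (s : ℤ) - 1) * (C Ym * T 1) *
          (C Xm * T 1 - 1) * f j)
      + T (6 * s) * f (q - 1)
      - ∑ j ∈ Finset.Icc 1 s, C (Xm * Ym * Xm) * T (6 * (s : ℤ) - 6 * j + 3)
      + ∑ j ∈ Finset.Icc 1 s, T (6 * (s : ℤ) - 6 * j)) := by
  refine IsTwin.add (IsTwin.sub (IsTwin.add ?_ ?_) ?_) ?_
  · refine IsTwin.sum _ _ fun j hj => ?_
    obtain ⟨hj1, hj2⟩ := Finset.mem_Icc.mp hj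
    exact ((isTwin_K s hs).mul (hf j hj1 hj2)).smul (m j)
  · rw [show (6 * (s:ℤ)) = 3*(2*(s:ℤ)) by ring]
    have hT : (T (3*(2*(s:ℤ))) : L) = gU (2*(s:ℤ)) := by rw [gU, map_one, one_mul]
    rw [hT]
    exact (isTwin_gU _).mul (hf (q-1) (by omega) le_rfl)
  · refine IsTwin.sum _ _ fun j hj => ?_
    rw [show (6*(s:ℤ) - 6*(j:ℤ) + 3) = 3*(2*(s:ℤ)-2*(j:ℤ)+1) by ring, ← gV]
    exact isTwin_gV _
  · refine IsTwin.sum _ _ fun j hj => ?_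
    rw [show (6*(s:ℤ) - 6*(j:ℤ)) = 3*(2*(s:ℤ)-2*(j:ℤ)) by ring]
    have hT : (T (3*(2*(s:ℤ)-2*(j:ℤ))) : L) = gU (2*(s:ℤ)-2*(j:ℤ)) := by
      rw [gU, map_one, one_mul]
    rw [hT]
    exact isTwin_gU _
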